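/- Fix y ≠ 0. For each x ∈ ℝ let α(x) = (√((x−1)²+y²) + √((x+1)²+y²))/2 and β(x) = (√((x+1)²+y²) − √((x−1)²+y²))/2. Then for every x ∈ ℝ, the real functions α and β are differentiable in x with ∂α/∂x = β(α²−1)/(α²−β²) and ∂β/∂x = α(1−β²)/(α²−β²). -/

import Mathlib

/-- `α(x) = (√((x-1)²+y²) + √((x+1)²+y²))/2` as a function of `x` for fixed `y`. -/
noncomputable def alphaR (y x : ℝ) : ℝ :=
  (Real.sqrt ((x - 1) ^ 2 + y ^ 2) + Real.sqrt ((x + 1) ^ 2 + y ^ 2)) / 2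

/-- `β(x) = (√((x+1)²+y²) - √((x-1)²+y²))/2` as a function of `x` for fixed `y`. -/
noncomputable def betaR (y x : ℝ) : ℝ :=
  (Real.sqrt ((x + 1) ^ 2 + y ^ 2) - Real.sqrt ((x - 1) ^ 2 + y ^ 2)) / 2

theorem stmt8 (y : ℝ) (hy : y ≠ 0) (x : ℝ) :
    HasDerivAt (alphaR y)
      (betaR y x * ((alphaR y x) ^ 2 - 1) / ((alphaR y x) ^ 2 - (betaR y x) ^ 2)) x ∧
    HasDerivAt (betaR y)
      (alphaR y x * (1 - (betaR y x) ^ 2) / ((alphaR y x) ^ 2 - (betaR y x) ^ 2)) x := by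
  have hy2 : 0 < y ^ 2 := by positivity
  have hA0 : 0 < (x - 1) ^ 2 + y ^ 2 := by positivity
  have hB0 : 0 < (x + 1) ^ 2 + y ^ 2 := by positivity
  set s := Real.sqrt ((x - 1) ^ 2 + y ^ 2) with hsdef
  set t := Real.sqrt ((x + 1) ^ 2 + y ^ 2) with htdef
  have hs0 : 0 < s := Real.sqrt_pos.mpr hA0
  have ht0 : 0 < t := Real.sqrt_pos.mpr hB0
  have hs : s ^ 2 = (x - 1) ^ 2 + y ^ 2 := Real.sq_sqrt hA0.le
  have ht : t ^ 2 = (x + 1) ^ 2 + y ^ 2 := Real.sq_sqrt hB0.le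
  have hst : s * t ≠ 0 := by positivity
  have hinner1 : HasDerivAt (fun x : ℝ => (x - 1) ^ 2 + y ^ 2) (2 * (x - 1)) x := by
    have := (((hasDerivAt_id x).sub_const 1).pow 2).add_const (y ^ 2)
    simpa using this
  have hinner2 : HasDerivAt (fun x : ℝ => (x + 1) ^ 2 + y ^ 2) (2 * (x + 1)) x := by
    have := (((hasDerivAt_id x).add_const 1).pow 2).add_const (y ^ 2)
    simpa using this
  have d1 : HasDerivAt (fun x : ℝ => Real.sqrt ((x - 1) ^ 2 + y ^ 2)) ((x - 1) / s) x := by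
    have := hinner1.sqrt hA0.ne'
    convert this using 1
    rw [← hsdef]
    field_simp
  have d2 : HasDerivAt (fun x : ℝ => Real.sqrt ((x + 1) ^ 2 + y ^ 2)) ((x + 1) / t) x := by
    have := hinner2.sqrt hB0.ne'
    convert this using 1
    rw [← htdef]
    field_simp
  have hab : alphaR y x = (s + t) / 2 := rfl
  have hbb : betaR y x = (t - s) / 2 := rfl
  constructor
  · have := (d1.add d2).div_const 2
    convert this using 1
    · rfl
    · rfl
    · rfl
    rw [hab, hbb]
    have hd : ((s + t) / 2) ^ 2 - ((t - s) / 2) ^ 2 = s * t := by ring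
    rw [hd]
    field_simp
    ring_nf
    linear_combination (t + s) * ht - (t + s) * hs
  · have := (d2.sub d1).div_const 2
    convert this using 1
    · rfl
    · rfl
    · rfl
    rw [hab, hbb]
    have hd : ((s + t) / 2) ^ 2 - ((t - s) / 2) ^ 2 = s * t := by ring
    rw [hd]
    field_simp
    ring_nf
    linear_combination (s - t) * ht - (s - t) * hs
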